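/- Let Γ = { ( n + βᵀ(nα + m), nα + m ) : n ∈ ℤ, m ∈ ℤ^d } be a lattice of special form in ℝ × ℝ^d, and let W, W' ⊆ ℝ^d be two bounded Riemann measurable sets. If the model sets Λ(Γ, W) and Λ(Γ, W') are bounded distance equivalent, then there exists a constant C such that for every positive integer N, the inequality |Σ_{n=0}^{N−1} χ_W(x + nα) − Σ_{n=0}^{N−1} χ_{W'}(x + nα)| ≤ C holds for almost every x ∈ ℝ^d. -/

import Mathlib

open MeasureTheory

/-- The multiplicity function `χ_W(x) = Σ_{m ∈ ℤ^d} 1_W(x + m)`. -/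
noncomputable def chiFun {d : ℕ} (W : Set (Fin d → ℝ)) (x : Fin d → ℝ) : ℝ :=
  ∑' k : Fin d → ℤ, Set.indicator W 1 (x + fun i => (k i : ℝ))

/-- The model set obtained from the lattice of special form
`Γ = { (n + βᵀ(nα + m), nα + m) : n ∈ ℤ, m ∈ ℤ^d }` and the window `W`:
`Λ(Γ, W) = { p₁(γ) : γ ∈ Γ, p₂(γ) ∈ W }`. -/
def specialModelSet {d : ℕ} (α β : Fin d → ℝ) (W : Set (Fin d → ℝ)) : Set ℝ :=
  {x | ∃ (n : ℤ) (m : Fin d → ℤ),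
    ((n : ℝ) • α + fun j => (m j : ℝ)) ∈ W ∧
    x = (n : ℝ) + ∑ i, β i * ((n : ℝ) • α + fun j => (m j : ℝ)) i}

/-- Two point sets are bounded distance equivalent: there is a bijection
moving every point a distance at most `K` for some `K > 0`. -/
def BDEquiv {E : Type*} [MetricSpace E] (Λ Λ' : Set E) : Prop :=
  ∃ K : ℝ, 0 < K ∧ ∃ χ : Λ → Λ', Function.Bijective χ ∧ ∀ p : Λ, dist (χ p : E) (p : E) ≤ K

set_option linter.unusedSectionVars false
set_option maxHeartbeats 1000000

noncomputable section BDEAux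

variable {d : ℕ}

/-- cast of integer vector to real vector -/
def vecZ (k : Fin d → ℤ) : Fin d → ℝ := fun i => (k i : ℝ)

lemma vecZ_add (k m : Fin d → ℤ) : vecZ (k + m) = vecZ k + vecZ m := by
  funext i; simp [vecZ]

lemma vecZ_sub (k m : Fin d → ℤ) : vecZ (k - m) = vecZ k - vecZ m := by
  funext i; simp [vecZ]

def kset (W : Set (Fin d → ℝ)) (x : Fin d → ℝ) : Set (Fin d → ℤ) :=
  {k | x + vecZ k ∈ W}

lemma mem_kset {W : Set (Fin d → ℝ)} {x : Fin d → ℝ} {k : Fin d → ℤ} :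
    k ∈ kset W x ↔ x + vecZ k ∈ W := Iff.rfl

lemma kset_finite {W : Set (Fin d → ℝ)} {R : ℝ} (hW : ∀ w ∈ W, ‖w‖ ≤ R)
    (x : Fin d → ℝ) : (kset W x).Finite := by
  have hsub : kset W x ⊆
      ↑(Fintype.piFinset fun i => Finset.Icc ⌈-x i - R⌉ ⌊-x i + R⌋) := by
    intro k hk
    have hnorm : ‖x + vecZ k‖ ≤ R := hW _ hk
    simp only [Finset.coe_sort_coe, Finset.mem_coe, Fintype.mem_piFinset, Finset.mem_Icc]
    intro i
    have h1 : |x i + (k i : ℝ)| ≤ R := by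
      have := norm_le_pi_norm (x + vecZ k) i
      simpa [vecZ, Real.norm_eq_abs] using this.trans hnorm
    rw [abs_le] at h1
    constructor
    · rw [Int.ceil_le]; linarith [h1.1]
    · rw [Int.le_floor]; linarith [h1.2]
  exact Set.Finite.subset (Finset.finite_toSet _) hsub

lemma chiFun_eq_ncard {W : Set (Fin d → ℝ)} {R : ℝ} (hW : ∀ w ∈ W, ‖w‖ ≤ R)
    (x : Fin d → ℝ) : chiFun W x = ((kset W x).ncard : ℝ) := by
  have hfin := kset_finite hW x
  have hsupp : ∀ k ∉ hfin.toFinset,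
      Set.indicator W (1 : (Fin d → ℝ) → ℝ) (x + fun i => ((k i : ℤ) : ℝ)) = 0 := by
    intro k hk
    rw [Set.Finite.mem_toFinset] at hk
    have hk2 : x + (fun i => ((k i : ℤ) : ℝ)) ∉ W := hk
    exact Set.indicator_of_notMem hk2 (1 : (Fin d → ℝ) → ℝ)
  rw [chiFun, tsum_eq_sum (s := hfin.toFinset) hsupp, Set.ncard_eq_toFinset_card _ hfin]
  rw [Finset.card_eq_sum_ones, Nat.cast_sum]
  refine Finset.sum_congr rfl fun k hk => ?_
  rw [Set.Finite.mem_toFinset] at hk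
  have hk' : x + (fun i => ((k i : ℤ) : ℝ)) ∈ W := hk
  rw [Set.indicator_of_mem hk']
  simp

lemma chiFun_nonneg {W : Set (Fin d → ℝ)} {R : ℝ} (hW : ∀ w ∈ W, ‖w‖ ≤ R)
    (x : Fin d → ℝ) : 0 ≤ chiFun W x := by
  rw [chiFun_eq_ncard hW x]; positivity

lemma ncard_kset_le {W : Set (Fin d → ℝ)} {R : ℝ} (hW : ∀ w ∈ W, ‖w‖ ≤ R)
    (x : Fin d → ℝ) : (kset W x).ncard ≤ (2 * ⌈R⌉₊ + 2) ^ d := by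
  have hfin := kset_finite hW x
  rw [Set.ncard_eq_toFinset_card _ hfin]
  have hsub : hfin.toFinset ⊆
      Fintype.piFinset fun i => Finset.Icc ⌈-x i - R⌉ ⌊-x i + R⌋ := by
    intro k hk
    rw [Set.Finite.mem_toFinset] at hk
    have hnorm : ‖x + vecZ k‖ ≤ R := hW _ hk
    simp only [Fintype.mem_piFinset, Finset.mem_Icc]
    intro i
    have h1 : |x i + (k i : ℝ)| ≤ R := by
      have := norm_le_pi_norm (x + vecZ k) i
      simpa [vecZ, Real.norm_eq_abs] using this.trans hnorm
    rw [abs_le] at h1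
    exact ⟨by rw [Int.ceil_le]; linarith [h1.1], by rw [Int.le_floor]; linarith [h1.2]⟩
  refine (Finset.card_le_card hsub).trans ?_
  rw [Fintype.card_piFinset]
  have : ∀ i : Fin d, (Finset.Icc ⌈-x i - R⌉ ⌊-x i + R⌋).card ≤ 2 * ⌈R⌉₊ + 2 := by
    intro i
    rw [Int.card_Icc]
    rw [Int.toNat_le]
    have h1 : ((⌊-x i + R⌋ : ℝ)) ≤ -x i + R := Int.floor_le _
    have h2 : (-x i - R : ℝ) ≤ ⌈-x i - R⌉ := Int.le_ceil _
    have h3 : R ≤ (⌈R⌉₊ : ℝ) := by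
      rcases le_or_gt 0 R with h | h
      · exact Nat.le_ceil R
      · exact h.le.trans (by positivity)
    push_cast
    have : (⌊-x i + R⌋ : ℝ) + 1 - ⌈-x i - R⌉ ≤ 2 * ⌈R⌉₊ + 2 := by linarith
    exact_mod_cast this
  calc ∏ i, (Finset.Icc ⌈-x i - R⌉ ⌊-x i + R⌋).card
      ≤ ∏ _i : Fin d, (2 * ⌈R⌉₊ + 2) := Finset.prod_le_prod' fun i _ => this i
    _ = (2 * ⌈R⌉₊ + 2) ^ d := by simp [Finset.prod_const]

lemma chiFun_le {W : Set (Fin d → ℝ)} {R : ℝ} (hW : ∀ w ∈ W, ‖w‖ ≤ R)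
    (x : Fin d → ℝ) : chiFun W x ≤ ((2 * ⌈R⌉₊ + 2) ^ d : ℕ) := by
  rw [chiFun_eq_ncard hW x]
  exact_mod_cast ncard_kset_le hW x

lemma kset_translate (W : Set (Fin d → ℝ)) (x : Fin d → ℝ) (m : Fin d → ℤ) :
    kset W (x + vecZ m) = (fun k => k - m) '' kset W x := by
  ext k
  simp only [mem_kset, Set.mem_image]
  constructor
  · intro hk
    refine ⟨m + k, ?_, by abel⟩
    show x + vecZ (m + k) ∈ W
    rw [vecZ_add, ← add_assoc]
    exact hk
  · rintro ⟨j, hj, rfl⟩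
    show x + vecZ m + vecZ (j - m) ∈ W
    rw [vecZ_sub, show x + vecZ m + (vecZ j - vecZ m) = x + vecZ j by abel]
    exact hj

lemma chiFun_translate {W : Set (Fin d → ℝ)} {R : ℝ} (hW : ∀ w ∈ W, ‖w‖ ≤ R)
    (x : Fin d → ℝ) (m : Fin d → ℤ) : chiFun W (x + vecZ m) = chiFun W x := by
  rw [chiFun_eq_ncard hW, chiFun_eq_ncard hW, kset_translate W x m,
    Set.ncard_image_of_injective _ (fun a b h => by simpa using sub_left_injective h)]

lemma kset_locally_const {W : Set (Fin d → ℝ)} {R : ℝ} (hW : ∀ w ∈ W, ‖w‖ ≤ R)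
    {x : Fin d → ℝ} (hx : ∀ k : Fin d → ℤ, x + vecZ k ∉ frontier W) :
    ∃ ε : ℝ, 0 < ε ∧ ∀ y : Fin d → ℝ, ‖y - x‖ < ε → kset W y = kset W x := by
  classical
  have hT : (kset {w : Fin d → ℝ | ‖w‖ ≤ R + 1} x).Finite :=
    kset_finite (fun w hw => hw) x
  set T := kset {w : Fin d → ℝ | ‖w‖ ≤ R + 1} x with hTdef
  have key : ∀ k : Fin d → ℤ, ∃ δ, 0 < δ ∧
      ∀ y : Fin d → ℝ, ‖y - x‖ < δ → (y + vecZ k ∈ W ↔ x + vecZ k ∈ W) := by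
    intro k
    rcases em (x + vecZ k ∈ closure W) with hcl | hcl
    · have hint : x + vecZ k ∈ interior W := by
        by_contra hint
        exact hx k ⟨hcl, hint⟩
      obtain ⟨δ, hδ, hball⟩ := Metric.mem_nhds_iff.mp (mem_interior_iff_mem_nhds.mp hint)
      refine ⟨δ, hδ, fun y hy => ?_⟩
      have h1 : y + vecZ k ∈ W := by
        apply hball
        rw [Metric.mem_ball, dist_eq_norm, add_sub_add_right_eq_sub]
        exact hy
      have h2 : x + vecZ k ∈ W := by
        apply hball
        simpa using hδ
      simp [h1, h2]
    · obtain ⟨δ, hδ, hball⟩ := Metric.mem_nhds_iff.mp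
        ((isClosed_closure (s := W)).isOpen_compl.mem_nhds hcl)
      refine ⟨δ, hδ, fun y hy => ?_⟩
      have h1 : y + vecZ k ∉ W := by
        intro hmem
        have hb : y + vecZ k ∈ Metric.ball (x + vecZ k) δ := by
          rw [Metric.mem_ball, dist_eq_norm, add_sub_add_right_eq_sub]
          exact hy
        exact hball hb (subset_closure hmem)
      have h2 : x + vecZ k ∉ W := fun hm => hcl (subset_closure hm)
      simp [h1, h2]
  choose δ hδpos hδ using key
  set F := hT.toFinset with hFdef
  set ε : ℝ := min 1 (if h : F.Nonempty then F.inf' h δ else 1) with hεdef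
  have hεpos : 0 < ε := by
    rw [hεdef]
    apply lt_min one_pos
    split
    · next h => exact (Finset.lt_inf'_iff h).mpr fun k _ => hδpos k
    · exact one_pos
  refine ⟨ε, hεpos, fun y hy => ?_⟩
  ext k
  rcases em (k ∈ T) with hkT | hkT
  · have hne : F.Nonempty := ⟨k, hT.mem_toFinset.mpr hkT⟩
    have hεδ : ε ≤ δ k := by
      rw [hεdef]
      refine (min_le_right _ _).trans ?_
      rw [dif_pos hne]
      exact Finset.inf'_le δ (hT.mem_toFinset.mpr hkT)
    have := hδ k y (lt_of_lt_of_le hy hεδ)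
    simpa [mem_kset] using this
  · have hbig : R + 1 < ‖x + vecZ k‖ := by
      by_contra hle
      push_neg at hle
      exact hkT hle
    have hx' : x + vecZ k ∉ W := fun hm => by
      have := hW _ hm
      linarith
    have hy' : y + vecZ k ∉ W := by
      intro hm
      have h1 : ‖y + vecZ k‖ ≤ R := hW _ hm
      have h2 : ‖x + vecZ k‖ ≤ ‖y + vecZ k‖ + ‖y - x‖ := by
        have : x + vecZ k = (y + vecZ k) - (y - x) := by abel
        rw [this]
        exact norm_sub_le _ _
      have h3 : ‖y - x‖ < 1 := lt_of_lt_of_le hy (by rw [hεdef]; exact min_le_left _ _)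
      linarith
    simp [mem_kset, hx', hy']

lemma chiFun_locally_const {W : Set (Fin d → ℝ)} {R : ℝ} (hW : ∀ w ∈ W, ‖w‖ ≤ R)
    {x : Fin d → ℝ} (hx : ∀ k : Fin d → ℤ, x + vecZ k ∉ frontier W) :
    ∃ ε : ℝ, 0 < ε ∧ ∀ y : Fin d → ℝ, ‖y - x‖ < ε → chiFun W y = chiFun W x := by
  obtain ⟨ε, hε, h⟩ := kset_locally_const hW hx
  exact ⟨ε, hε, fun y hy => by rw [chiFun_eq_ncard hW, chiFun_eq_ncard hW, h y hy]⟩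

end BDEAux

section LemA

open Submodule

variable {E : Type*} [NormedAddCommGroup E] [InnerProductSpace ℝ E] [FiniteDimensional ℝ E]

/-- The largest linear subspace contained in a closed additive subgroup. -/
def lineFull (G : AddSubgroup E) : Submodule ℝ E where
  carrier := {x | ∀ t : ℝ, t • x ∈ G}
  add_mem' := fun hx hy t => by rw [smul_add]; exact G.add_mem (hx t) (hy t)
  zero_mem' := fun t => by rw [smul_zero]; exact G.zero_mem
  smul_mem' := fun c x hx t => by rw [smul_smul]; exact hx (t * c)

lemma lineFull_le (G : AddSubgroup E) {x : E} (hx : x ∈ lineFull G) : x ∈ G := by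
  have := hx 1; rwa [one_smul] at this

/-- Structure theorem consequence: a proper closed subgroup of a finite-dimensional real
inner product space is annihilated into `ℤ` by some nonzero linear functional. -/
theorem exists_functional_int_of_closed_proper (G : AddSubgroup E)
    (hclosed : IsClosed (G : Set E)) (hne : (G : Set E) ≠ Set.univ) :
    ∃ f : E →ₗ[ℝ] ℝ, f ≠ 0 ∧ ∀ g ∈ G, ∃ z : ℤ, f g = (z : ℝ) := by
  classical
  rcases eq_or_ne (span ℝ (G : Set E)) ⊤ with hspan | hspan
  case inr =>
    -- G spans a proper subspace; take an orthogonal functional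
    have h1 : (span ℝ (G : Set E))ᗮ ≠ ⊥ := by
      intro h
      exact hspan (Submodule.orthogonal_eq_bot_iff.mp h)
    obtain ⟨x, hxO, hx0⟩ := Submodule.exists_mem_ne_zero_of_ne_bot h1
    refine ⟨(innerSL ℝ x).toLinearMap, ?_, ?_⟩
    · intro h
      apply hx0
      have := LinearMap.congr_fun h x
      simpa [real_inner_self_eq_norm_sq, pow_eq_zero_iff] using
        (by simpa using this : (inner ℝ x x : ℝ) = 0)
    · intro g hg
      refine ⟨0, ?_⟩
      have : (inner ℝ x g : ℝ) = 0 := by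
        have := (Submodule.mem_orthogonal _ x).mp hxO g (Submodule.subset_span hg)
        rwa [real_inner_comm] at this
      simpa using this
  case inl =>
  set V := lineFull G with hV
  -- the discrete complement part
  have claim2 : ∃ ε : ℝ, 0 < ε ∧ ∀ g : E, g ∈ G → g ∈ Vᗮ → ‖g‖ < ε → g = 0 := by
    by_contra hc
    push_neg at hc
    have hseq : ∀ n : ℕ, ∃ g : E, g ∈ G ∧ g ∈ Vᗮ ∧ ‖g‖ < 1 / (n + 1) ∧ g ≠ 0 := by
      intro n
      obtain ⟨g, hg1, hg2, hg3, hg4⟩ := hc (1 / (n + 1)) (by positivity)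
      exact ⟨g, hg1, hg2, hg3, hg4⟩
    choose gf hG hperp hlt hne0 using hseq
    set u : ℕ → E := fun n => ‖gf n‖⁻¹ • gf n with hu
    have hnorm : ∀ n, ‖u n‖ = 1 := by
      intro n
      rw [hu]
      simp only [norm_smul, norm_inv, norm_norm]
      rw [inv_mul_cancel₀ (norm_ne_zero_iff.mpr (hne0 n))]
    have husph : ∀ n, u n ∈ Metric.sphere (0 : E) 1 := by
      intro n; simpa [mem_sphere_zero_iff_norm] using hnorm n
    obtain ⟨x, hxs, φ, hφ, hconv⟩ :=
      (isCompact_sphere (0 : E) 1).tendsto_subseq husph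
    have hxperp : x ∈ Vᗮ := by
      refine (Submodule.isClosed_orthogonal V).mem_of_tendsto hconv ?_
      exact Filter.Eventually.of_forall fun j =>
        Submodule.smul_mem _ _ (hperp (φ j))
    have hc0 : Filter.Tendsto (fun j => ‖gf (φ j)‖) Filter.atTop (nhds 0) := by
      apply squeeze_zero (fun j => norm_nonneg _) (fun j => ?_)
        tendsto_one_div_add_atTop_nhds_zero_nat
      refine (hlt (φ j)).le.trans ?_
      have : (j : ℝ) + 1 ≤ (φ j : ℝ) + 1 := by
        have h : j ≤ φ j := hφ.le_apply
        have := (Nat.cast_le (α := ℝ)).mpr h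
        linarith
      apply one_div_le_one_div_of_le (by positivity) this
    have hxV : x ∈ V := by
      intro t
      set c : ℕ → ℝ := fun j => ‖gf (φ j)‖ with hcdef
      have hcpos : ∀ j, 0 < c j := fun j => norm_pos_iff.mpr (hne0 (φ j))
      set k : ℕ → ℤ := fun j => ⌊t / c j⌋ with hk
      have hterm : ∀ j, ((k j : ℝ) * c j) • u (φ j) = (k j : ℝ) • gf (φ j) := by
        intro j
        rw [hu, smul_smul, mul_assoc,
          mul_inv_cancel₀ (norm_ne_zero_iff.mpr (hne0 (φ j))), mul_one]
      have hkc : Filter.Tendsto (fun j => (k j : ℝ) * c j) Filter.atTop (nhds t) := by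
        rw [tendsto_iff_dist_tendsto_zero]
        apply squeeze_zero (fun j => dist_nonneg) (fun j => ?_) hc0
        rw [Real.dist_eq, abs_sub_comm, abs_le]
        have h1 : (k j : ℝ) ≤ t / c j := Int.floor_le _
        have h2 : t / c j < k j + 1 := Int.lt_floor_add_one _
        have h3 := hcpos j
        rw [le_div_iff₀ h3] at h1
        rw [div_lt_iff₀ h3] at h2
        constructor <;> nlinarith
      have htend : Filter.Tendsto (fun j => (k j : ℝ) • gf (φ j)) Filter.atTop (nhds (t • x)) := by
        have := hkc.smul hconv
        refine this.congr fun j => ?_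
        exact hterm j
      have : t • x ∈ G := by
        refine hclosed.mem_of_tendsto htend ?_
        refine Filter.Eventually.of_forall fun j => ?_
        have : ((k j : ℝ)) • gf (φ j) = (k j) • gf (φ j) := by
          rw [Int.cast_smul_eq_zsmul]
        rw [this]
        exact zsmul_mem (hG (φ j)) _
      exact this
    have : x = 0 := by
      have := (Submodule.orthogonal_disjoint V).le_bot ⟨hxV, hxperp⟩
      simpa using this
    rw [this] at hxs
    simp at hxs
  obtain ⟨ε, hε, hdisc⟩ := claim2
  -- Vᗮ is nontrivial unless G = ⊤
  have hVne : Vᗮ ≠ ⊥ := by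
    intro h
    have hVtop : V = ⊤ := Submodule.orthogonal_eq_bot_iff.mp h
    apply hne
    rw [Set.eq_univ_iff_forall]
    intro x
    have hx : x ∈ V := by rw [hVtop]; trivial
    exact lineFull_le G hx
  set L : Submodule ℤ ↥Vᗮ :=
    AddSubgroup.toIntSubmodule (G.comap (Vᗮ.subtype.toAddMonoidHom)) with hLdef
  have hLmem : ∀ x : ↥Vᗮ, x ∈ L ↔ (x : E) ∈ G := fun x => Iff.rfl
  haveI hdiscL : DiscreteTopology L := by
    rw [discreteTopology_iff_isOpen_singleton_zero]
    have hset : ({0} : Set L) = ((↑) : L → ↥Vᗮ) ⁻¹' (Metric.ball 0 ε) := by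
      ext x
      simp only [Set.mem_singleton_iff, Set.mem_preimage, Metric.mem_ball, dist_zero_right]
      constructor
      · rintro rfl; simpa using hε
      · intro hx
        have h1 : ((x : ↥Vᗮ) : E) ∈ G := (hLmem _).mp x.2
        have h2 : ((x : ↥Vᗮ) : E) ∈ Vᗮ := (x : ↥Vᗮ).2
        have h3 : ‖((x : ↥Vᗮ) : E)‖ < ε := hx
        have := hdisc _ h1 h2 h3
        have : (x : ↥Vᗮ) = 0 := by exact_mod_cast this
        exact Subtype.ext this
    rw [hset]
    exact IsOpen.preimage continuous_subtype_val Metric.isOpen_ball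
  haveI : CompleteSpace ↥V := FiniteDimensional.complete ℝ V
  have hproj : ∀ g ∈ G, (g - (orthogonalProjection V g : E)) ∈ G := fun g hg =>
    G.sub_mem hg (lineFull_le G (SetLike.coe_mem (orthogonalProjection V g)))
  have hspanL : span ℝ (L : Set ↥Vᗮ) = ⊤ := by
    rw [Submodule.eq_top_iff']
    intro y
    set S : Submodule ℝ E := span ℝ ((G : Set E) ∩ Vᗮ) with hS
    have hSperp : S ≤ Vᗮ := span_le.mpr Set.inter_subset_right
    have hsup : V ⊔ S = ⊤ := by
      rw [eq_top_iff, ← hspan]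
      apply span_le.mpr
      intro g hg
      have h1 : (orthogonalProjection V g : E) ∈ V := SetLike.coe_mem _
      have h2 : g - (orthogonalProjection V g : E) ∈ (G : Set E) ∩ Vᗮ :=
        ⟨hproj g hg, Submodule.sub_starProjection_mem_orthogonal g⟩
      have : g = (orthogonalProjection V g : E) + (g - (orthogonalProjection V g : E)) := by abel
      rw [this]
      exact Submodule.add_mem _ (Submodule.mem_sup_left h1)
        (Submodule.mem_sup_right (Submodule.subset_span h2))
    have hyE : (y : E) ∈ S := by
      have : (y : E) ∈ V ⊔ S := by rw [hsup]; trivial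
      obtain ⟨v, hv, s, hs, hvs⟩ := Submodule.mem_sup.mp this
      have hsperp : s ∈ Vᗮ := hSperp hs
      have hvperp : v ∈ Vᗮ := by
        have : v = (y : E) - s := by rw [← hvs]; abel
        rw [this]
        exact Submodule.sub_mem _ (SetLike.coe_mem y) hsperp
      have hv0 : v = 0 := by
        have := (Submodule.orthogonal_disjoint V).le_bot ⟨hv, hvperp⟩
        simpa using this
      rw [← hvs, hv0, zero_add]
      exact hs
    -- transfer to the subtype
    have himg : (G : Set E) ∩ Vᗮ = (Vᗮ.subtype) '' (L : Set ↥Vᗮ) := by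
      ext z
      constructor
      · rintro ⟨hzG, hzV⟩
        exact ⟨⟨z, hzV⟩, (hLmem _).mpr hzG, rfl⟩
      · rintro ⟨w, hw, rfl⟩
        exact ⟨(hLmem _).mp hw, (w : ↥Vᗮ).2⟩
    rw [hS, himg, ← Submodule.map_span] at hyE
    obtain ⟨w, hw, hwy⟩ := hyE
    have : w = y := Subtype.ext hwy
    rwa [← this]
  haveI : IsZLattice ℝ L := ⟨hspanL⟩
  haveI : Module.Free ℤ L := ZLattice.module_free ℝ L
  have hLne : Nontrivial L := by
    rw [Submodule.nontrivial_iff_ne_bot]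
    intro hbot
    apply hVne
    rw [hbot] at hspanL
    have : ∀ y : ↥Vᗮ, y = 0 := by
      intro y
      have hy : y ∈ span ℝ ((⊥ : Submodule ℤ ↥Vᗮ) : Set ↥Vᗮ) := by rw [hspanL]; trivial
      simpa using hy
    rw [Submodule.eq_bot_iff]
    intro x hx
    have := this ⟨x, hx⟩
    exact congrArg Subtype.val this
  haveI : Nonempty (Module.Free.ChooseBasisIndex ℤ L) := Module.Basis.index_nonempty
    (Module.Free.chooseBasis ℤ L)
  set b := Module.Free.chooseBasis ℤ L with hb
  set i₀ : Module.Free.ChooseBasisIndex ℤ L := Classical.arbitrary _ with hi₀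
  set bR := b.ofZLatticeBasis ℝ L with hbR
  set f₀ : ↥Vᗮ →ₗ[ℝ] ℝ := bR.coord i₀ with hf₀
  set f : E →ₗ[ℝ] ℝ := f₀.comp ((orthogonalProjection Vᗮ : E →L[ℝ] ↥Vᗮ) : E →ₗ[ℝ] ↥Vᗮ)
    with hf
  have hval : ∀ g ∈ G, ∃ z : ℤ, f g = (z : ℝ) := by
    intro g hg
    have hkey : orthogonalProjection Vᗮ g =
        ⟨g - orthogonalProjection V g, Submodule.sub_starProjection_mem_orthogonal g⟩ :=
      orthogonalProjection_orthogonal g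
    have hinG : ((orthogonalProjection Vᗮ g : ↥Vᗮ) : E) ∈ G := by
      rw [hkey]
      exact hproj g hg
    set xL : L := ⟨orthogonalProjection Vᗮ g, (hLmem _).mpr hinG⟩ with hxL
    refine ⟨b.repr xL i₀, ?_⟩
    have : f g = bR.repr (orthogonalProjection Vᗮ g) i₀ := rfl
    rw [this]
    have : (orthogonalProjection Vᗮ g) = ((xL : L) : ↥Vᗮ) := rfl
    rw [this, Module.Basis.ofZLatticeBasis_repr_apply]
  have hfne : f ≠ 0 := by
    intro h0
    have h1 : f ((bR i₀ : ↥Vᗮ) : E) = 1 := by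
      have hval' : orthogonalProjection Vᗮ ((bR i₀ : ↥Vᗮ) : E) = bR i₀ :=
        orthogonalProjection_mem_subspace_eq_self (bR i₀)
      have : f ((bR i₀ : ↥Vᗮ) : E) = f₀ (bR i₀) := by
        rw [hf]
        simp only [LinearMap.comp_apply, ContinuousLinearMap.coe_coe]
        rw [hval']
      rw [this, hf₀, Module.Basis.coord_apply, Module.Basis.repr_self, Finsupp.single_eq_same]
    rw [h0] at h1
    simp at h1
  exact ⟨f, hfne, hval⟩

end LemA

section Kron

variable {d : ℕ}

lemma vecZ_neg (k : Fin d → ℤ) : vecZ (-k) = -vecZ k := by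
  funext i; simp [vecZ]

lemma vecZ_zero : vecZ (0 : Fin d → ℤ) = 0 := by
  funext i; simp [vecZ]

lemma vecZ_zsmul (z : ℤ) (k : Fin d → ℤ) : vecZ (z • k) = (z : ℝ) • vecZ k := by
  funext i; simp [vecZ]

lemma vecZ_single (i : Fin d) : vecZ (Pi.single i (1 : ℤ)) = Pi.single i (1 : ℝ) := by
  funext j
  rcases eq_or_ne j i with rfl | hj
  · simp [vecZ]
  · simp [vecZ, Pi.single_apply, hj]

/-- The subgroup `ℤα + ℤ^d` of `ℝ^d`. -/
def orbitGroup (α : Fin d → ℝ) : AddSubgroup (Fin d → ℝ) where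
  carrier := {x | ∃ (k : ℤ) (m : Fin d → ℤ), x = (k : ℝ) • α + vecZ m}
  add_mem' := by
    rintro x y ⟨k, m, rfl⟩ ⟨k', m', rfl⟩
    refine ⟨k + k', m + m', ?_⟩
    rw [vecZ_add]
    push_cast
    rw [add_smul]
    abel
  zero_mem' := ⟨0, 0, by rw [vecZ_zero]; simp⟩
  neg_mem' := by
    rintro x ⟨k, m, rfl⟩
    refine ⟨-k, -m, ?_⟩
    rw [vecZ_neg]
    push_cast
    rw [neg_smul]
    abel

theorem kronecker_dense {α : Fin d → ℝ}
    (hα : LinearIndependent ℚ (fun o : Option (Fin d) => o.elim (1 : ℝ) α)) :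
    Dense (orbitGroup α : Set (Fin d → ℝ)) := by
  classical
  by_contra hnd
  set G := (orbitGroup α).topologicalClosure with hG
  have hGclosed : IsClosed (G : Set (Fin d → ℝ)) :=
    AddSubgroup.isClosed_topologicalClosure _
  have hGne : (G : Set (Fin d → ℝ)) ≠ Set.univ := by
    intro h
    apply hnd
    have : closure (orbitGroup α : Set (Fin d → ℝ)) = Set.univ := by
      rw [← h]
      rfl
    rw [dense_iff_closure_eq]
    exact this
  set e : (Fin d → ℝ) ≃L[ℝ] EuclideanSpace ℝ (Fin d) := (EuclideanSpace.equiv (Fin d) ℝ).symm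
    with he
  set G' : AddSubgroup (EuclideanSpace ℝ (Fin d)) :=
    AddSubgroup.map (e : (Fin d → ℝ) →L[ℝ] EuclideanSpace ℝ (Fin d)).toLinearMap.toAddMonoidHom G
    with hG'
  have hG'coe : (G' : Set (EuclideanSpace ℝ (Fin d))) = e '' (G : Set (Fin d → ℝ)) := rfl
  have hG'closed : IsClosed (G' : Set (EuclideanSpace ℝ (Fin d))) := by
    rw [hG'coe]
    exact e.toHomeomorph.isClosedMap _ hGclosed
  have hG'ne : (G' : Set (EuclideanSpace ℝ (Fin d))) ≠ Set.univ := by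
    rw [hG'coe]
    intro h
    apply hGne
    rw [Set.eq_univ_iff_forall]
    intro x
    have : e x ∈ e '' (G : Set (Fin d → ℝ)) := by rw [h]; trivial
    obtain ⟨g, hg, hge⟩ := this
    rwa [← e.injective hge]
  obtain ⟨f', hf'ne, hf'int⟩ := exists_functional_int_of_closed_proper G' hG'closed hG'ne
  set f : (Fin d → ℝ) →ₗ[ℝ] ℝ :=
    f'.comp (e : (Fin d → ℝ) →L[ℝ] EuclideanSpace ℝ (Fin d)).toLinearMap with hf
  have hfint : ∀ g ∈ orbitGroup α, ∃ z : ℤ, f g = (z : ℝ) := by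
    intro g hg
    have hgG : g ∈ G := (orbitGroup α).le_topologicalClosure hg
    exact hf'int _ ⟨g, hgG, rfl⟩
  have hfne : f ≠ 0 := by
    intro h0
    apply hf'ne
    ext x
    have : f (e.symm x) = 0 := by rw [h0]; rfl
    have h2 : f' (e (e.symm x)) = 0 := this
    rwa [e.apply_symm_apply] at h2
  -- evaluate on generators
  have hαA : α ∈ orbitGroup α := ⟨1, 0, by rw [vecZ_zero]; simp⟩
  have hsingleA : ∀ i : Fin d, (Pi.single i (1 : ℝ) : Fin d → ℝ) ∈ orbitGroup α :=
    fun i => ⟨0, Pi.single i 1, by rw [vecZ_single]; simp⟩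
  obtain ⟨z₀, hz₀⟩ := hfint α hαA
  choose z hz using fun i => hfint _ (hsingleA i)
  have hfα : f α = ∑ i, α i * z i := by
    have hα_eq : α = ∑ i, α i • (Pi.single i (1 : ℝ) : Fin d → ℝ) := by
      funext j
      rw [Finset.sum_apply]
      simp [Pi.single_apply]
    conv_lhs => rw [hα_eq]
    rw [map_sum]
    congr 1
    funext i
    rw [_root_.map_smul, hz i]
    simp [mul_comm]
  -- the rational relation
  have hrel : ∀ o : Option (Fin d),
      (Option.elim o (-z₀ : ℚ) (fun i => (z i : ℚ))) = 0 := by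
    apply Fintype.linearIndependent_iff.mp hα
    rw [Fintype.sum_option]
    simp only [Option.elim]
    have : ∀ i : Fin d, ((z i : ℚ)) • (α i) = (z i : ℝ) * α i := by
      intro i
      rw [Rat.smul_def]
      push_cast
      ring
    rw [Finset.sum_congr rfl fun i _ => this i]
    rw [Rat.smul_def]
    push_cast
    have hsum : ∑ i, (z i : ℝ) * α i = (z₀ : ℝ) := by
      rw [← hz₀, hfα]
      exact Finset.sum_congr rfl fun i _ => mul_comm _ _
    rw [hsum]
    ring
  have hzzero : ∀ i, z i = 0 := by
    intro i
    have := hrel (some i)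
    simpa using this
  apply hfne
  apply LinearMap.ext
  intro x
  have hx_eq : x = ∑ i, x i • (Pi.single i (1 : ℝ) : Fin d → ℝ) := by
    funext j
    rw [Finset.sum_apply]
    simp [Pi.single_apply]
  conv_lhs => rw [hx_eq]
  rw [map_sum]
  simp only [_root_.map_smul]
  have hzero : ∀ i ∈ Finset.univ, x i • f (Pi.single i (1 : ℝ)) = (0 : ℝ) := by
    intro i _
    rw [hz i, hzzero i]
    simp
  rw [Finset.sum_congr rfl hzero]
  simp

end Kron

section NatOrbit

variable {d : ℕ}

/-- Pigeonhole: positive return times near `0` modulo `ℤ^d`. -/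
lemma exists_pos_return (α : Fin d → ℝ) {ε : ℝ} (hε : 0 < ε) :
    ∃ p : ℕ, 0 < p ∧ ∃ q : Fin d → ℤ, ‖(p : ℝ) • α + vecZ q‖ < ε := by
  classical
  obtain ⟨n, hn⟩ := exists_nat_one_div_lt hε
  have hn'pos : (0 : ℝ) < (n : ℝ) + 1 := by positivity
  have hfl : ∀ (k : ℕ) (i : Fin d),
      (⌊((n : ℝ) + 1) * Int.fract ((k : ℝ) * α i)⌋).toNat < n + 1 := by
    intro k i
    have h1 : ((n : ℝ) + 1) * Int.fract ((k : ℝ) * α i) < (n : ℝ) + 1 := by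
      have := Int.fract_lt_one ((k : ℝ) * α i)
      have h0 := Int.fract_nonneg ((k : ℝ) * α i)
      nlinarith
    have h2 : ⌊((n : ℝ) + 1) * Int.fract ((k : ℝ) * α i)⌋ < ((n : ℤ) + 1) := by
      rw [Int.floor_lt]
      push_cast
      exact h1
    omega
  set g : ℕ → (Fin d → Fin (n + 1)) := fun k i =>
    ⟨(⌊((n : ℝ) + 1) * Int.fract ((k : ℝ) * α i)⌋).toNat, hfl k i⟩ with hg
  obtain ⟨a, b, hab, heq⟩ := Finite.exists_ne_map_eq_of_infinite g
  -- order them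
  wlog hlt : a < b generalizing a b
  · exact this b a hab.symm heq.symm (by omega)
  refine ⟨b - a, by omega, fun i => ⌊(a : ℝ) * α i⌋ - ⌊(b : ℝ) * α i⌋, ?_⟩
  have hcoord : ∀ i : Fin d,
      |(((b - a : ℕ) : ℝ)) * α i + ((⌊(a : ℝ) * α i⌋ - ⌊(b : ℝ) * α i⌋ : ℤ) : ℝ)|
        < 1 / ((n : ℝ) + 1) := by
    intro i
    have hfloor_eq : ⌊((n : ℝ) + 1) * Int.fract ((a : ℝ) * α i)⌋
        = ⌊((n : ℝ) + 1) * Int.fract ((b : ℝ) * α i)⌋ := by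
      have h := congrFun heq i
      rw [hg] at h
      simp only at h
      have := congrArg Fin.val h
      simp only at this
      have h0a : (0 : ℤ) ≤ ⌊((n : ℝ) + 1) * Int.fract ((a : ℝ) * α i)⌋ := by
        apply Int.floor_nonneg.mpr
        have := Int.fract_nonneg ((a : ℝ) * α i)
        positivity
      have h0b : (0 : ℤ) ≤ ⌊((n : ℝ) + 1) * Int.fract ((b : ℝ) * α i)⌋ := by
        apply Int.floor_nonneg.mpr
        have := Int.fract_nonneg ((b : ℝ) * α i)
        positivity
      omega
    set A := Int.fract ((a : ℝ) * α i) with hA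
    set B := Int.fract ((b : ℝ) * α i) with hB
    have hAB : |B - A| < 1 / ((n : ℝ) + 1) := by
      set j := ⌊((n : ℝ) + 1) * A⌋ with hj
      have h1 : (j : ℝ) ≤ ((n : ℝ) + 1) * A := Int.floor_le _
      have h2 : ((n : ℝ) + 1) * A < j + 1 := Int.lt_floor_add_one _
      have h3 : (j : ℝ) ≤ ((n : ℝ) + 1) * B := by
        rw [hfloor_eq]
        exact Int.floor_le _
      have h4 : ((n : ℝ) + 1) * B < j + 1 := by
        rw [hfloor_eq]
        push_cast
        exact Int.lt_floor_add_one _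
      rw [abs_lt]
      constructor
      · have hneg : -(B - A) < 1 / ((n : ℝ) + 1) := by
          rw [lt_div_iff₀ hn'pos]
          nlinarith
        linarith
      · rw [lt_div_iff₀ hn'pos]
        nlinarith
    have hident : (((b - a : ℕ) : ℝ)) * α i
        + ((⌊(a : ℝ) * α i⌋ - ⌊(b : ℝ) * α i⌋ : ℤ) : ℝ) = B - A := by
      rw [hB, hA, Int.fract, Int.fract]
      have hba : ((b - a : ℕ) : ℝ) = (b : ℝ) - (a : ℝ) := by
        have : (a : ℝ) ≤ (b : ℝ) := by exact_mod_cast hlt.le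
        push_cast [Nat.cast_sub hlt.le]
        ring
      rw [hba]
      push_cast
      ring
    rw [hident]
    exact hAB
  have hnorm : ‖((b - a : ℕ) : ℝ) • α + vecZ (fun i => ⌊(a : ℝ) * α i⌋ - ⌊(b : ℝ) * α i⌋)‖
      < 1 / ((n : ℝ) + 1) := by
    rw [pi_norm_lt_iff (by positivity)]
    intro i
    have := hcoord i
    simpa [vecZ, Real.norm_eq_abs] using this
  exact hnorm.trans hn

/-- Density of the forward orbit `ℕ·α + ℤ^d`. -/
theorem nat_orbit_dense {α : Fin d → ℝ}
    (hα : LinearIndependent ℚ (fun o : Option (Fin d) => o.elim (1 : ℝ) α))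
    (x : Fin d → ℝ) {ε : ℝ} (hε : 0 < ε) :
    ∃ (k : ℕ) (m : Fin d → ℤ), ‖((k : ℝ) • α + vecZ m) - x‖ < ε := by
  have hdense := kronecker_dense hα
  have hx : x ∈ closure (orbitGroup α : Set (Fin d → ℝ)) := hdense x
  obtain ⟨y, hy, hyx⟩ := Metric.mem_closure_iff.mp hx (ε / 2) (by positivity)
  obtain ⟨k, m, rfl⟩ := hy
  rcases le_or_gt 0 k with hk | hk
  · refine ⟨k.toNat, m, ?_⟩
    rw [dist_comm, dist_eq_norm] at hyx
    have : ((k.toNat : ℕ) : ℝ) = (k : ℝ) := by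
      exact_mod_cast Int.toNat_of_nonneg hk
    rw [this]
    linarith
  · set t : ℕ := (-k).toNat with ht
    have htpos : 0 < t := by omega
    have htk : ((t : ℤ)) = -k := Int.toNat_of_nonneg (by omega)
    obtain ⟨p, hp, q, hq⟩ := exists_pos_return α (ε := ε / (2 * t))
      (by positivity)
    set k' : ℤ := k + (t : ℤ) * (p : ℤ) with hk'
    have hk'nn : 0 ≤ k' := by
      have hp' : (1 : ℤ) ≤ (p : ℤ) := by exact_mod_cast hp
      have ht' : (0 : ℤ) ≤ (t : ℤ) := by positivity
      rw [hk']
      nlinarith [htk]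
    refine ⟨k'.toNat, m + (t : ℤ) • q, ?_⟩
    have hcast : ((k'.toNat : ℕ) : ℝ) = (k' : ℝ) := by
      exact_mod_cast Int.toNat_of_nonneg hk'nn
    rw [hcast]
    have hexp : (k' : ℝ) • α + vecZ (m + (t : ℤ) • q)
        = ((k : ℝ) • α + vecZ m) + (t : ℝ) • ((p : ℝ) • α + vecZ q) := by
      rw [vecZ_add, vecZ_zsmul, hk']
      push_cast
      rw [add_smul, smul_add, smul_smul]
      push_cast
      abel
    rw [hexp]
    have h1 : ‖((k : ℝ) • α + vecZ m) - x‖ < ε / 2 := by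
      rw [dist_comm, dist_eq_norm] at hyx
      exact hyx
    have h2 : ‖(t : ℝ) • ((p : ℝ) • α + vecZ q)‖ < ε / 2 := by
      rw [norm_smul, Real.norm_natCast]
      calc (t : ℝ) * ‖(p : ℝ) • α + vecZ q‖ < (t : ℝ) * (ε / (2 * t)) := by
            apply mul_lt_mul_of_pos_left hq
            exact_mod_cast htpos
        _ = ε / 2 := by
            field_simp
    calc ‖(((k : ℝ) • α + vecZ m) + (t : ℝ) • ((p : ℝ) • α + vecZ q)) - x‖
        = ‖(((k : ℝ) • α + vecZ m) - x) + (t : ℝ) • ((p : ℝ) • α + vecZ q)‖ := by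
          congr 1; abel
      _ ≤ ‖((k : ℝ) • α + vecZ m) - x‖ + ‖(t : ℝ) • ((p : ℝ) • α + vecZ q)‖ :=
          norm_add_le _ _
      _ < ε / 2 + ε / 2 := by linarith
      _ = ε := by ring

end NatOrbit

noncomputable section Counting

variable {d : ℕ} (α β : Fin d → ℝ)

/-- the point of the model set associated to the pair `(n, m)` -/
def ptfun (n : ℤ) (m : Fin d → ℤ) : ℝ :=
  (n : ℝ) + ∑ i, β i * (((n : ℝ) • α + fun j => ((m j : ℤ) : ℝ)) i)

lemma ptfun_eq (n : ℤ) (m : Fin d → ℤ) :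
    ptfun α β n m = (n : ℝ) * (1 + ∑ i, β i * α i) + ∑ i, β i * (m i : ℝ) := by
  unfold ptfun
  have h : ∀ i : Fin d, β i * (((n : ℝ) • α + fun j => ((m j : ℤ) : ℝ)) i)
      = (n : ℝ) * (β i * α i) + β i * (m i : ℝ) := by
    intro i
    simp only [Pi.add_apply, Pi.smul_apply, smul_eq_mul]
    ring
  rw [Finset.sum_congr rfl fun i _ => h i, Finset.sum_add_distrib, ← Finset.mul_sum]
  ring

lemma mem_specialModelSet_of (n : ℤ) (m : Fin d → ℤ) {W : Set (Fin d → ℝ)}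
    (h : ((n : ℝ) • α + fun j => ((m j : ℤ) : ℝ)) ∈ W) :
    ptfun α β n m ∈ specialModelSet α β W :=
  ⟨n, m, h, rfl⟩

lemma ptfun_sub_bound {W : Set (Fin d → ℝ)} {R : ℝ} (hW : ∀ w ∈ W, ‖w‖ ≤ R)
    {n : ℤ} {m : Fin d → ℤ} (h : ((n : ℝ) • α + fun j => ((m j : ℤ) : ℝ)) ∈ W) :
    |ptfun α β n m - (n : ℝ)| ≤ (∑ i, |β i|) * R := by
  have hnorm : ‖((n : ℝ) • α + fun j => ((m j : ℤ) : ℝ))‖ ≤ R := hW _ h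
  have h1 : ptfun α β n m - (n : ℝ)
      = ∑ i, β i * (((n : ℝ) • α + fun j => ((m j : ℤ) : ℝ)) i) := by
    unfold ptfun; ring
  rw [h1]
  calc |∑ i, β i * (((n : ℝ) • α + fun j => ((m j : ℤ) : ℝ)) i)|
      ≤ ∑ i, |β i * (((n : ℝ) • α + fun j => ((m j : ℤ) : ℝ)) i)| :=
        Finset.abs_sum_le_sum_abs _ _
    _ ≤ ∑ i, |β i| * R := by
        apply Finset.sum_le_sum
        intro i _
        rw [abs_mul]
        apply mul_le_mul_of_nonneg_left _ (abs_nonneg _)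
        calc |((n : ℝ) • α + fun j => ((m j : ℤ) : ℝ)) i|
            ≤ ‖((n : ℝ) • α + fun j => ((m j : ℤ) : ℝ))‖ := by
              have := norm_le_pi_norm ((n : ℝ) • α + fun j => ((m j : ℤ) : ℝ)) i
              simpa [Real.norm_eq_abs] using this
          _ ≤ R := hnorm
    _ = (∑ i, |β i|) * R := by rw [← Finset.sum_mul]

lemma ptfun_injective
    (hβ : LinearIndependent ℚ (fun o : Option (Fin d) =>
      o.elim ((1 : ℝ) + ∑ i, β i * α i) β))
    {n n' : ℤ} {m m' : Fin d → ℤ} (h : ptfun α β n m = ptfun α β n' m') :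
    n = n' ∧ m = m' := by
  rw [ptfun_eq, ptfun_eq] at h
  have hrel : ((n - n' : ℤ) : ℝ) * (1 + ∑ i, β i * α i)
      + ∑ i, ((m i - m' i : ℤ) : ℝ) * β i = 0 := by
    push_cast
    have : ∀ i ∈ Finset.univ, ((m i : ℝ) - (m' i : ℝ)) * β i
        = β i * (m i : ℝ) - β i * (m' i : ℝ) := fun i _ => by ring
    rw [Finset.sum_congr rfl this, Finset.sum_sub_distrib]
    nlinarith [h]
  have key := Fintype.linearIndependent_iff.mp hβ
    (fun o => Option.elim o ((n - n' : ℤ) : ℚ) (fun i => ((m i - m' i : ℤ) : ℚ)))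
  have hzero : ∀ o : Option (Fin d),
      (Option.elim o ((n - n' : ℤ) : ℚ) (fun i => ((m i - m' i : ℤ) : ℚ))) = 0 := by
    apply key
    rw [Fintype.sum_option]
    simp only [Option.elim]
    rw [Rat.smul_def]
    have : ∀ i : Fin d, ((m i - m' i : ℤ) : ℚ) • β i = ((m i - m' i : ℤ) : ℝ) * β i := by
      intro i
      rw [Rat.smul_def]
      norm_cast
    rw [Finset.sum_congr rfl fun i _ => this i]
    push_cast
    push_cast at hrel
    linarith [hrel]
  constructor
  · have := hzero none
    simp only [Option.elim] at this
    have : ((n - n' : ℤ) : ℚ) = 0 := this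
    have : (n - n' : ℤ) = 0 := by exact_mod_cast this
    omega
  · funext i
    have := hzero (some i)
    simp only [Option.elim] at this
    have : ((m i - m' i : ℤ) : ℚ) = 0 := this
    have : (m i - m' i : ℤ) = 0 := by exact_mod_cast this
    omega

end Counting

noncomputable section Counting2

variable {d : ℕ} (α β : Fin d → ℝ)

/-- The finite set of pairs `(n, m)` with `a ≤ n ≤ b` and `nα + m ∈ W`. -/
def pairFinset {W : Set (Fin d → ℝ)} {R : ℝ} (hW : ∀ w ∈ W, ‖w‖ ≤ R) (a b : ℤ) :
    Finset (ℤ × (Fin d → ℤ)) :=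
  (Finset.Icc a b).biUnion fun n =>
    ({n} : Finset ℤ) ×ˢ (kset_finite hW ((n : ℝ) • α)).toFinset

lemma mem_pairFinset {W : Set (Fin d → ℝ)} {R : ℝ} (hW : ∀ w ∈ W, ‖w‖ ≤ R)
    (a b : ℤ) (nm : ℤ × (Fin d → ℤ)) :
    nm ∈ pairFinset α hW a b ↔
      (a ≤ nm.1 ∧ nm.1 ≤ b) ∧ ((nm.1 : ℝ) • α + vecZ nm.2) ∈ W := by
  obtain ⟨n, m⟩ := nm
  simp only [pairFinset, Finset.mem_biUnion, Finset.mem_Icc, Finset.mem_product,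
    Finset.mem_singleton, Set.Finite.mem_toFinset]
  constructor
  · rintro ⟨n', ⟨h1, h2⟩, rfl, hm⟩
    exact ⟨⟨h1, h2⟩, hm⟩
  · rintro ⟨⟨h1, h2⟩, hm⟩
    exact ⟨n, ⟨h1, h2⟩, rfl, hm⟩

lemma card_pairFinset {W : Set (Fin d → ℝ)} {R : ℝ} (hW : ∀ w ∈ W, ‖w‖ ≤ R)
    (a b : ℤ) :
    (pairFinset α hW a b).card
      = ∑ n ∈ Finset.Icc a b, (kset W ((n : ℝ) • α)).ncard := by
  rw [pairFinset, Finset.card_biUnion]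
  · apply Finset.sum_congr rfl
    intro n _
    rw [Finset.card_product, Finset.card_singleton, one_mul,
      Set.ncard_eq_toFinset_card _ (kset_finite hW ((n : ℝ) • α))]
  · intro n _ n' _ hnn'
    rw [Function.onFun, Finset.disjoint_left]
    rintro ⟨a1, a2⟩ h1 h2
    rw [Finset.mem_product, Finset.mem_singleton] at h1 h2
    exact hnn' (h1.1 ▸ h2.1 ▸ rfl)

/-- representative data for a point of a model set -/
def repN {W : Set (Fin d → ℝ)} (x : specialModelSet α β W) : ℤ := x.2.choose

def repM {W : Set (Fin d → ℝ)} (x : specialModelSet α β W) : Fin d → ℤ :=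
  x.2.choose_spec.choose

lemma repW {W : Set (Fin d → ℝ)} (x : specialModelSet α β W) :
    ((repN α β x : ℝ) • α + fun j => ((repM α β x j : ℤ) : ℝ)) ∈ W :=
  x.2.choose_spec.choose_spec.1

lemma repVal {W : Set (Fin d → ℝ)} (x : specialModelSet α β W) :
    (x : ℝ) = ptfun α β (repN α β x) (repM α β x) :=
  x.2.choose_spec.choose_spec.2

variable {W W' : Set (Fin d → ℝ)} {RW RW' : ℝ}

/-- Core counting lemma: an injection of model sets with bounded displacement yields
an inequality between interval counts, with a window enlargement. -/
lemma card_pairFinset_le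
    (hβ : LinearIndependent ℚ (fun o : Option (Fin d) =>
      o.elim ((1 : ℝ) + ∑ i, β i * α i) β))
    (hW : ∀ w ∈ W, ‖w‖ ≤ RW) (hW' : ∀ w ∈ W', ‖w‖ ≤ RW') {K : ℝ}
    (χ : specialModelSet α β W → specialModelSet α β W')
    (hinj : Function.Injective χ)
    (hdist : ∀ p, dist ((χ p : ℝ)) ((p : ℝ)) ≤ K)
    (a b J : ℤ) (hJ : (∑ i, |β i|) * RW + (∑ i, |β i|) * RW' + K ≤ (J : ℝ)) :
    (pairFinset α hW a b).card ≤ (pairFinset α hW' (a - J) (b + J)).card := by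
  classical
  set f : ℤ × (Fin d → ℤ) → ℤ × (Fin d → ℤ) := fun nm =>
    if h : ((nm.1 : ℝ) • α + fun j => ((nm.2 j : ℤ) : ℝ)) ∈ W then
      (repN α β (χ ⟨ptfun α β nm.1 nm.2, mem_specialModelSet_of α β nm.1 nm.2 h⟩),
        repM α β (χ ⟨ptfun α β nm.1 nm.2, mem_specialModelSet_of α β nm.1 nm.2 h⟩))
    else nm
    with hf
  apply Finset.card_le_card_of_injOn f
  · -- maps into the target window
    intro nm hnm
    rw [Finset.mem_coe, mem_pairFinset] at hnm
    obtain ⟨⟨ha, hb⟩, hmem⟩ := hnm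
    have hmem' : ((nm.1 : ℝ) • α + fun j => ((nm.2 j : ℤ) : ℝ)) ∈ W := hmem
    set p : specialModelSet α β W :=
      ⟨ptfun α β nm.1 nm.2, mem_specialModelSet_of α β nm.1 nm.2 hmem'⟩ with hp
    have hfeq : f nm = (repN α β (χ p), repM α β (χ p)) := by
      rw [hf]
      simp only [dif_pos hmem', hp]
    rw [hfeq, Finset.mem_coe, mem_pairFinset]
    refine ⟨?_, repW α β (χ p)⟩
    have hval' : ((χ p : ℝ)) = ptfun α β (repN α β (χ p)) (repM α β (χ p)) :=
      repVal α β (χ p)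
    have hb1 : |ptfun α β (repN α β (χ p)) (repM α β (χ p)) - ((repN α β (χ p) : ℤ) : ℝ)|
        ≤ (∑ i, |β i|) * RW' := ptfun_sub_bound α β hW' (repW α β (χ p))
    have hb2 : |ptfun α β nm.1 nm.2 - (nm.1 : ℝ)| ≤ (∑ i, |β i|) * RW :=
      ptfun_sub_bound α β hW hmem'
    have hb3 : |(χ p : ℝ) - (p : ℝ)| ≤ K := by
      rw [← Real.dist_eq]
      exact hdist p
    have hpval : ((p : ℝ)) = ptfun α β nm.1 nm.2 := rfl
    have hna : (a : ℝ) ≤ (nm.1 : ℝ) := by exact_mod_cast ha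
    have hnb : ((nm.1 : ℝ)) ≤ (b : ℝ) := by exact_mod_cast hb
    rw [hpval, hval'] at hb3
    rw [abs_le] at hb1 hb2 hb3
    have hJr : ((a : ℝ)) - (J : ℝ) ≤ ((repN α β (χ p) : ℤ) : ℝ) := by
      linarith [hb1.1, hb1.2, hb2.1, hb2.2, hb3.1, hb3.2]
    have hJl : ((repN α β (χ p) : ℤ) : ℝ) ≤ (b : ℝ) + (J : ℝ) := by
      linarith [hb1.1, hb1.2, hb2.1, hb2.2, hb3.1, hb3.2]
    exact ⟨by exact_mod_cast hJr, by exact_mod_cast hJl⟩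
  · -- injectivity on the source
    intro nm1 h1 nm2 h2 hfeq
    rw [Finset.mem_coe, mem_pairFinset] at h1 h2
    have hmem1 : ((nm1.1 : ℝ) • α + fun j => ((nm1.2 j : ℤ) : ℝ)) ∈ W := h1.2
    have hmem2 : ((nm2.1 : ℝ) • α + fun j => ((nm2.2 j : ℤ) : ℝ)) ∈ W := h2.2
    set p1 : specialModelSet α β W :=
      ⟨ptfun α β nm1.1 nm1.2, mem_specialModelSet_of α β nm1.1 nm1.2 hmem1⟩ with hp1
    set p2 : specialModelSet α β W :=
      ⟨ptfun α β nm2.1 nm2.2, mem_specialModelSet_of α β nm2.1 nm2.2 hmem2⟩ with hp2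
    have hf1 : f nm1 = (repN α β (χ p1), repM α β (χ p1)) := by
      rw [hf]; simp only [dif_pos hmem1, hp1]
    have hf2 : f nm2 = (repN α β (χ p2), repM α β (χ p2)) := by
      rw [hf]; simp only [dif_pos hmem2, hp2]
    rw [hf1, hf2] at hfeq
    have e1 : repN α β (χ p1) = repN α β (χ p2) := congrArg Prod.fst hfeq
    have e2 : repM α β (χ p1) = repM α β (χ p2) := congrArg Prod.snd hfeq
    have hveq : ((χ p1 : ℝ)) = ((χ p2 : ℝ)) := by
      rw [repVal α β (χ p1), repVal α β (χ p2), e1, e2]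
    have hpeq : p1 = p2 := hinj (Subtype.ext hveq)
    have hvals : ptfun α β nm1.1 nm1.2 = ptfun α β nm2.1 nm2.2 :=
      congrArg Subtype.val hpeq
    obtain ⟨hn, hm⟩ := ptfun_injective α β hβ hvals
    exact Prod.ext hn hm

/-- Summed version of the counting inequality. -/
lemma sum_chi_le
    (hβ : LinearIndependent ℚ (fun o : Option (Fin d) =>
      o.elim ((1 : ℝ) + ∑ i, β i * α i) β))
    (hW : ∀ w ∈ W, ‖w‖ ≤ RW) (hW' : ∀ w ∈ W', ‖w‖ ≤ RW') {K : ℝ}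
    (χ : specialModelSet α β W → specialModelSet α β W')
    (hinj : Function.Injective χ)
    (hdist : ∀ p, dist ((χ p : ℝ)) ((p : ℝ)) ≤ K)
    (a b J : ℤ) (hJ : (∑ i, |β i|) * RW + (∑ i, |β i|) * RW' + K ≤ (J : ℝ))
    (hJ0 : 0 ≤ J) :
    ∑ n ∈ Finset.Icc a b, chiFun W ((n : ℝ) • α)
      ≤ ∑ n ∈ Finset.Icc a b, chiFun W' ((n : ℝ) • α)
        + 2 * (J : ℝ) * (((2 * ⌈RW'⌉₊ + 2) ^ d : ℕ) : ℝ) := by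
  classical
  set M' : ℕ := (2 * ⌈RW'⌉₊ + 2) ^ d with hM'
  -- the ℕ-level inequality
  have hsub : Finset.Icc a b ⊆ Finset.Icc (a - J) (b + J) :=
    Finset.Icc_subset_Icc (by omega) (by omega)
  have hcard := card_pairFinset_le α β hβ hW hW' χ hinj hdist a b J hJ
  rw [card_pairFinset, card_pairFinset] at hcard
  have hsplit : ∑ n ∈ Finset.Icc (a - J) (b + J), (kset W' ((n : ℝ) • α)).ncard
      = ∑ n ∈ Finset.Icc (a - J) (b + J) \ Finset.Icc a b, (kset W' ((n : ℝ) • α)).ncard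
        + ∑ n ∈ Finset.Icc a b, (kset W' ((n : ℝ) • α)).ncard :=
    (Finset.sum_sdiff hsub).symm
  have hedge : ∑ n ∈ Finset.Icc (a - J) (b + J) \ Finset.Icc a b,
      (kset W' ((n : ℝ) • α)).ncard ≤ (2 * J).toNat * M' := by
    calc ∑ n ∈ Finset.Icc (a - J) (b + J) \ Finset.Icc a b, (kset W' ((n : ℝ) • α)).ncard
        ≤ (Finset.Icc (a - J) (b + J) \ Finset.Icc a b).card • M' := by
          apply Finset.sum_le_card_nsmul
          intro x _
          exact ncard_kset_le hW' _
      _ = (Finset.Icc (a - J) (b + J) \ Finset.Icc a b).card * M' := by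
          rw [smul_eq_mul]
      _ ≤ (2 * J).toNat * M' := by
          apply Nat.mul_le_mul_right
          rw [Finset.card_sdiff_of_subset hsub, Int.card_Icc, Int.card_Icc]
          omega
  have hnat : ∑ n ∈ Finset.Icc a b, (kset W ((n : ℝ) • α)).ncard
      ≤ ∑ n ∈ Finset.Icc a b, (kset W' ((n : ℝ) • α)).ncard + (2 * J).toNat * M' := by
    omega
  -- cast to ℝ
  have hLHS : ∑ n ∈ Finset.Icc a b, chiFun W ((n : ℝ) • α)
      = ((∑ n ∈ Finset.Icc a b, (kset W ((n : ℝ) • α)).ncard : ℕ) : ℝ) := by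
    rw [Nat.cast_sum]
    exact Finset.sum_congr rfl fun n _ => chiFun_eq_ncard hW _
  have hRHS : ∑ n ∈ Finset.Icc a b, chiFun W' ((n : ℝ) • α)
      = ((∑ n ∈ Finset.Icc a b, (kset W' ((n : ℝ) • α)).ncard : ℕ) : ℝ) := by
    rw [Nat.cast_sum]
    exact Finset.sum_congr rfl fun n _ => chiFun_eq_ncard hW' _
  rw [hLHS, hRHS]
  have h2J : ((2 * J).toNat : ℤ) = 2 * J := Int.toNat_of_nonneg (by omega)
  have hcast : (((2 * J).toNat * M' : ℕ) : ℝ) = 2 * (J : ℝ) * (M' : ℝ) := by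
    rw [Nat.cast_mul]
    congr 1
    exact_mod_cast h2J
  calc ((∑ n ∈ Finset.Icc a b, (kset W ((n : ℝ) • α)).ncard : ℕ) : ℝ)
      ≤ ((∑ n ∈ Finset.Icc a b, (kset W' ((n : ℝ) • α)).ncard + (2 * J).toNat * M' : ℕ) : ℝ) := by
        exact_mod_cast hnat
    _ = ((∑ n ∈ Finset.Icc a b, (kset W' ((n : ℝ) • α)).ncard : ℕ) : ℝ)
        + 2 * (J : ℝ) * (M' : ℝ) := by
        rw [Nat.cast_add, hcast]

end Counting2


section Shift

/-- Reindexing a Birkhoff sum as a sum over an integer interval. -/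
lemma sum_shift (f : ℤ → ℝ) (k N : ℕ) :
    ∑ n ∈ Finset.range N, f ((k : ℤ) + n)
      = ∑ j ∈ Finset.Icc (k : ℤ) ((k : ℤ) + N - 1), f j := by
  apply Finset.sum_bij' (i := fun (n : ℕ) (_ : n ∈ Finset.range N) => (k : ℤ) + n)
    (j := fun (z : ℤ) (_ : z ∈ Finset.Icc (k : ℤ) ((k : ℤ) + N - 1)) => (z - k).toNat)
  · intro a ha
    rw [Finset.mem_range] at ha
    rw [Finset.mem_Icc]
    omega
  · intro z hz
    rw [Finset.mem_Icc] at hz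
    rw [Finset.mem_range]
    omega
  · intro a ha
    rw [Finset.mem_range] at ha
    omega
  · intro z hz
    rw [Finset.mem_Icc] at hz
    omega
  · intro a ha
    rfl

end Shift


/-- Let `Γ` be a lattice of special form with parameters `α, β`, and let `W, W' ⊆ ℝ^d`
be bounded Riemann measurable sets. If `Λ(Γ, W)` and `Λ(Γ, W')` are bounded distance
equivalent, then there is a constant `C` such that for every `N`, the Birkhoff sums of
`χ_W` and `χ_{W'}` along `α` up to time `N` differ by at most `C` almost everywhere. -/
theorem bde_modelSets_implies_bounded_discrepancy {d : ℕ} (α β : Fin d → ℝ)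
    (hα : LinearIndependent ℚ (fun o : Option (Fin d) => o.elim (1 : ℝ) α))
    (hβ : LinearIndependent ℚ (fun o : Option (Fin d) =>
      o.elim ((1 : ℝ) + ∑ i, β i * α i) β))
    (W W' : Set (Fin d → ℝ))
    (hWbd : Bornology.IsBounded W) (hW'bd : Bornology.IsBounded W')
    (hWrm : volume (frontier W) = 0) (hW'rm : volume (frontier W') = 0)
    (hbde : BDEquiv (specialModelSet α β W) (specialModelSet α β W')) :
    ∃ C : ℝ, ∀ N : ℕ, 0 < N → ∀ᵐ x ∂(volume : Measure (Fin d → ℝ)),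
      |∑ n ∈ Finset.range N, chiFun W (x + (n : ℝ) • α) -
        ∑ n ∈ Finset.range N, chiFun W' (x + (n : ℝ) • α)| ≤ C := by
  classical
  obtain ⟨RW, hWR⟩ := Bornology.IsBounded.exists_norm_le hWbd
  obtain ⟨RW', hWR'⟩ := Bornology.IsBounded.exists_norm_le hW'bd
  obtain ⟨K, hKpos, χ, hbij, hdist⟩ := hbde
  set χe := Equiv.ofBijective χ hbij with hχe
  have hdistsymm : ∀ q : specialModelSet α β W',
      dist ((χe.symm q : ℝ)) ((q : ℝ)) ≤ K := by
    intro q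
    have h1 : χ (χe.symm q) = q := χe.apply_symm_apply q
    calc dist ((χe.symm q : ℝ)) ((q : ℝ)) = dist ((q : ℝ)) ((χe.symm q : ℝ)) := dist_comm _ _
      _ = dist ((χ (χe.symm q) : ℝ)) ((χe.symm q : ℝ)) := by rw [h1]
      _ ≤ K := hdist _
  set Bβ : ℝ := ∑ i, |β i| with hBβ
  set J : ℤ := max ⌈Bβ * RW + Bβ * RW' + K⌉ 0 with hJdef
  have hJub : Bβ * RW + Bβ * RW' + K ≤ (J : ℝ) := by
    refine (Int.le_ceil _).trans ?_
    exact_mod_cast le_max_left _ _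
  have hJ0 : (0 : ℤ) ≤ J := le_max_right _ _
  have hJr : (0 : ℝ) ≤ (J : ℝ) := by exact_mod_cast hJ0
  set MW : ℝ := (((2 * ⌈RW⌉₊ + 2) ^ d : ℕ) : ℝ) with hMW
  set MW' : ℝ := (((2 * ⌈RW'⌉₊ + 2) ^ d : ℕ) : ℝ) with hMW'
  have hMWnn : 0 ≤ MW := Nat.cast_nonneg _
  have hMW'nn : 0 ≤ MW' := Nat.cast_nonneg _
  have h2JMW : 0 ≤ 2 * (J : ℝ) * MW := by
    apply mul_nonneg (by linarith) hMWnn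
  have h2JMW' : 0 ≤ 2 * (J : ℝ) * MW' := by
    apply mul_nonneg (by linarith) hMW'nn
  have hside1 : ∀ a b : ℤ, ∑ n ∈ Finset.Icc a b, chiFun W ((n : ℝ) • α)
      ≤ ∑ n ∈ Finset.Icc a b, chiFun W' ((n : ℝ) • α) + 2 * (J : ℝ) * MW' :=
    fun a b => sum_chi_le α β hβ hWR hWR' χ hbij.injective hdist a b J hJub hJ0
  have hside2 : ∀ a b : ℤ, ∑ n ∈ Finset.Icc a b, chiFun W' ((n : ℝ) • α)
      ≤ ∑ n ∈ Finset.Icc a b, chiFun W ((n : ℝ) • α) + 2 * (J : ℝ) * MW :=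
    fun a b => sum_chi_le α β hβ hWR' hWR (⇑χe.symm) χe.symm.injective hdistsymm a b J
      (by linarith [hJub]) hJ0
  refine ⟨2 * (J : ℝ) * MW + 2 * (J : ℝ) * MW', fun N hN => ?_⟩
  set Z : Set (Fin d → ℝ) := ⋃ (n : ℕ), ⋃ (k : Fin d → ℤ),
    (fun y => y - ((n : ℝ) • α + vecZ k)) '' (frontier W ∪ frontier W') with hZ
  have hZ0 : volume Z = 0 := by
    rw [hZ]
    refine measure_iUnion_null fun n => measure_iUnion_null fun k => ?_
    have himg : (fun y => y - ((n : ℝ) • α + vecZ k)) '' (frontier W ∪ frontier W')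
        = (fun y => ((n : ℝ) • α + vecZ k) + y) ⁻¹' (frontier W ∪ frontier W') := by
      ext x
      simp only [Set.mem_image, Set.mem_preimage]
      constructor
      · rintro ⟨y, hy, rfl⟩
        simpa [add_sub_cancel] using hy
      · intro hx
        exact ⟨((n : ℝ) • α + vecZ k) + x, hx, by abel⟩
    rw [himg, measure_preimage_add]
    exact measure_union_null hWrm hW'rm
  filter_upwards [measure_eq_zero_iff_ae_notMem.mp hZ0] with x hx
  have hgood : ∀ (n : ℕ) (k : Fin d → ℤ),
      (x + (n : ℝ) • α) + vecZ k ∉ frontier W ∪ frontier W' := by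
    intro n k hmem
    apply hx
    rw [hZ]
    refine Set.mem_iUnion.mpr ⟨n, Set.mem_iUnion.mpr ⟨k, ?_⟩⟩
    exact ⟨(x + (n : ℝ) • α) + vecZ k, hmem, by dsimp only; abel⟩
  have hloc : ∀ n : ℕ, ∃ ε : ℝ, 0 < ε ∧ ∀ y : Fin d → ℝ, ‖y - (x + (n : ℝ) • α)‖ < ε →
      chiFun W y = chiFun W (x + (n : ℝ) • α) ∧
      chiFun W' y = chiFun W' (x + (n : ℝ) • α) := by
    intro n
    obtain ⟨ε1, hε1, h1⟩ := chiFun_locally_const hWR (x := x + (n : ℝ) • α)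
      (fun k hk => hgood n k (Set.mem_union_left _ hk))
    obtain ⟨ε2, hε2, h2⟩ := chiFun_locally_const hWR' (x := x + (n : ℝ) • α)
      (fun k hk => hgood n k (Set.mem_union_right _ hk))
    exact ⟨min ε1 ε2, lt_min hε1 hε2, fun y hy =>
      ⟨h1 y (hy.trans_le (min_le_left _ _)), h2 y (hy.trans_le (min_le_right _ _))⟩⟩
  choose εf hεf hconst using hloc
  have hNne : (Finset.range N).Nonempty := ⟨0, Finset.mem_range.mpr hN⟩
  set ε := (Finset.range N).inf' hNne εf with hεdef
  have hεpos : 0 < ε := (Finset.lt_inf'_iff hNne).mpr fun n _ => hεf n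
  obtain ⟨k, m, hkm⟩ := nat_orbit_dense hα x hεpos
  have hpoint : ∀ n ∈ Finset.range N,
      chiFun W (x + (n : ℝ) • α) = chiFun W ((((k : ℤ) + (n : ℤ) : ℤ) : ℝ) • α) ∧
      chiFun W' (x + (n : ℝ) • α) = chiFun W' ((((k : ℤ) + (n : ℤ) : ℤ) : ℝ) • α) := by
    intro n hn
    set y : Fin d → ℝ := ((k : ℝ) • α + vecZ m) + (n : ℝ) • α with hy
    have hdisty : ‖y - (x + (n : ℝ) • α)‖ < εf n := by
      have heq : y - (x + (n : ℝ) • α) = ((k : ℝ) • α + vecZ m) - x := by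
        rw [hy]; abel
      rw [heq]
      exact hkm.trans_le (Finset.inf'_le εf hn)
    obtain ⟨hcW, hcW'⟩ := hconst n y hdisty
    have hy2 : y = ((((k : ℤ) + (n : ℤ) : ℤ) : ℝ) • α) + vecZ m := by
      rw [hy]
      push_cast
      rw [add_smul]
      abel
    constructor
    · rw [← hcW, hy2, chiFun_translate hWR]
    · rw [← hcW', hy2, chiFun_translate hWR']
  have hsumW : ∑ n ∈ Finset.range N, chiFun W (x + (n : ℝ) • α)
      = ∑ j ∈ Finset.Icc (k : ℤ) ((k : ℤ) + N - 1), chiFun W ((j : ℝ) • α) := by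
    rw [Finset.sum_congr rfl (fun n hn => (hpoint n hn).1)]
    exact sum_shift (fun z : ℤ => chiFun W ((z : ℝ) • α)) k N
  have hsumW' : ∑ n ∈ Finset.range N, chiFun W' (x + (n : ℝ) • α)
      = ∑ j ∈ Finset.Icc (k : ℤ) ((k : ℤ) + N - 1), chiFun W' ((j : ℝ) • α) := by
    rw [Finset.sum_congr rfl (fun n hn => (hpoint n hn).2)]
    exact sum_shift (fun z : ℤ => chiFun W' ((z : ℝ) • α)) k N
  have habs1 := hside1 (k : ℤ) ((k : ℤ) + N - 1)
  have habs2 := hside2 (k : ℤ) ((k : ℤ) + N - 1)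
  rw [hsumW, hsumW', abs_le]
  constructor
  · linarith
  · linarith
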